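/- arXiv:1706.07255 — 2 statements merged into one kernel-verified Lean document; each statement's English description precedes it below -/
import Mathlib

section
/- For every integer n ≥ 0 and every configuration X on the figure-8 graph F_n (whose vertices are all occupied), the number of configurations Y with Y ≠ X such that (X, Y) is a valid synchronous move is at most 6; each such Y is obtained from X by rotating all robots one step around one of the three cycles of F_n (the cycles formed by the unions of two of the three junction-to-junction paths) in one of the two directions. Consequently, the number of configurations reachable from X by a single synchronous move (including X itself) is at most 7. -/
open SimpleGraph

def IsMove {V : Type*} (G : SimpleGraph V) (X Y : Equiv.Perm V) : Prop :=
  (∀ r, Y r = X r ∨ G.Adj (X r) (Y r)) ∧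
  (∀ r s, r ≠ s → ¬(Y r = X s ∧ Y s = X r ∧ X r ≠ X s))

def IsSolution {V : Type*} (G : SimpleGraph V) (XI XG : Equiv.Perm V) (T : ℕ)
    (Xs : ℕ → Equiv.Perm V) : Prop :=
  Xs 0 = XI ∧ Xs T = XG ∧ ∀ t < T, IsMove G (Xs t) (Xs (t + 1))

/-- Vertex set of the figure-8 graph `F n`: two junction vertices, plus the internal
vertices of three paths with `n`, `3n+2` and `3n+2` internal vertices respectively.
In total `7n + 6` vertices. -/
abbrev F8V (n : ℕ) := Fin 2 ⊕ (Fin n ⊕ (Fin (3 * n + 2) ⊕ Fin (3 * n + 2)))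

/-- One-directional edge relation for the figure-8 graph: junction `0` is attached to
the first internal vertex of each path, junction `1` to the last, consecutive internal
vertices of each path are adjacent, and when `n = 0` the first path degenerates to an
edge between the two junctions. -/
def F8Rel (n : ℕ) : F8V n → F8V n → Prop
  | .inl a, .inl b => n = 0 ∧ a.val = 0 ∧ b.val = 1
  | .inl a, .inr (.inl i) => (a.val = 0 ∧ i.val = 0) ∨ (a.val = 1 ∧ i.val + 1 = n)
  | .inl a, .inr (.inr (.inl i)) =>
      (a.val = 0 ∧ i.val = 0) ∨ (a.val = 1 ∧ i.val + 1 = 3 * n + 2)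
  | .inl a, .inr (.inr (.inr i)) =>
      (a.val = 0 ∧ i.val = 0) ∨ (a.val = 1 ∧ i.val + 1 = 3 * n + 2)
  | .inr (.inl i), .inr (.inl k) => i.val + 1 = k.val
  | .inr (.inr (.inl i)), .inr (.inr (.inl k)) => i.val + 1 = k.val
  | .inr (.inr (.inr i)), .inr (.inr (.inr k)) => i.val + 1 = k.val
  | _, _ => False

/-- The figure-8 graph `F n` on `7n + 6` vertices: two junction vertices joined by
three internally vertex-disjoint paths having `n`, `3n+2` and `3n+2` internal
vertices respectively. -/
def figureEight (n : ℕ) : SimpleGraph (F8V n) := SimpleGraph.fromRel (F8Rel n)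

namespace F8Proof

structure PathData {V : Type*} (G : SimpleGraph V) (m : ℕ) (w : ℕ → V) : Prop where
  inj : ∀ k l, k ≤ m + 1 → l ≤ m + 1 → w k = w l → k = l
  nbr : ∀ k, 1 ≤ k → k ≤ m → ∀ u, G.Adj (w k) u ↔ (u = w (k - 1) ∨ u = w (k + 1))

def Valid {V : Type*} (G : SimpleGraph V) (π : Equiv.Perm V) : Prop :=
  (∀ v, π v = v ∨ G.Adj v (π v)) ∧ (∀ v, π (π v) = v → π v = v)

variable {V : Type*} {G : SimpleGraph V} {π : Equiv.Perm V} {m : ℕ} {w : ℕ → V}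

lemma PathData.rev (pd : PathData G m w) : PathData G m (fun k => w (m + 1 - k)) := by
  constructor
  · intro k l hk hl h
    have := pd.inj (m + 1 - k) (m + 1 - l) (by omega) (by omega) h
    omega
  · intro k hk1 hk2 u
    have h := pd.nbr (m + 1 - k) (by omega) (by omega) u
    have e1 : m + 1 - k - 1 = m + 1 - (k + 1) := by omega
    have e2 : m + 1 - k + 1 = m + 1 - (k - 1) := by omega
    rw [e1, e2] at h
    simpa [or_comm] using h

lemma pathF (hv : Valid G π) (pd : PathData G m w) :
    ∀ k l, k ≤ l → l ≤ m → π (w k) = w (k + 1) → π (w l) = w (l + 1) := by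
  intro k l
  induction l with
  | zero =>
    intro hkl _ hk
    have : k = 0 := by omega
    exact this ▸ hk
  | succ l ih =>
    intro hkl hlm hk
    rcases Nat.lt_or_ge k (l + 1) with h | h
    · have hl : π (w l) = w (l + 1) := ih (by omega) (by omega) hk
      rcases hv.1 (w (l + 1)) with h1 | h1
      · exfalso
        have := π.injective (hl.trans h1.symm)
        have := pd.inj l (l + 1) (by omega) (by omega) this
        omega
      · rcases (pd.nbr (l + 1) (by omega) (by omega) (π (w (l + 1)))).mp h1 with h2 | h2
        · exfalso
          simp only [Nat.add_sub_cancel] at h2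
          have h3 : π (π (w l)) = w l := by rw [hl, h2]
          have h4 := hv.2 _ h3
          rw [hl] at h4
          have := pd.inj (l + 1) l (by omega) (by omega) h4
          omega
        · exact h2
    · have : k = l + 1 := by omega
      subst this
      exact hk

lemma pathB (hv : Valid G π) (pd : PathData G m w) :
    ∀ k l, 1 ≤ k → k ≤ l → l ≤ m + 1 → π (w k) = w (k - 1) → π (w l) = w (l - 1) := by
  intro k l
  induction l with
  | zero => intro h1 h2 _ _; omega
  | succ l ih =>
    intro hk1 hkl hlm hk
    rcases Nat.lt_or_ge k (l + 1) with h | h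
    · have hl : π (w l) = w (l - 1) := ih hk1 (by omega) (by omega) hk
      have hl1 : 1 ≤ l := by omega
      set u := π.symm (w l) with hu
      have hpu : π u = w l := π.apply_symm_apply _
      have hune : u ≠ w l := by
        intro hc
        rw [hc] at hpu
        rw [hpu] at hl
        have := pd.inj l (l - 1) (by omega) (by omega) hl
        omega
      rcases hv.1 u with h3 | h3
      · exact absurd (by rw [← h3, hpu]) hune
      · rw [hpu] at h3
        rcases (pd.nbr l (by omega) (by omega) u).mp h3.symm with h4 | h4
        · exfalso
          have h5 : π (π (w l)) = w l := by rw [hl, ← h4, hpu]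
          have h6 := hv.2 _ h5
          rw [hl] at h6
          have := pd.inj (l - 1) l (by omega) (by omega) h6
          omega
        · have : π (w (l + 1)) = w l := by rw [← h4, hpu]
          simpa using this
    · have : k = l + 1 := by omega
      subst this
      exact hk

lemma pathShiftDown (hv : Valid G π) (pd : PathData G m w)
    (h : π (w (m + 1)) = w m) : ∀ k, 1 ≤ k → k ≤ m + 1 → π (w k) = w (k - 1) := by
  intro k hk1 hk2
  have h0 : π ((fun k => w (m + 1 - k)) 0) = (fun k => w (m + 1 - k)) (0 + 1) := by
    simpa using h
  have := pathF hv pd.rev 0 (m + 1 - k) (by omega) (by omega) h0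
  have e1 : m + 1 - (m + 1 - k) = k := by omega
  have e2 : m + 1 - (m + 1 - k + 1) = k - 1 := by omega
  rw [e1, e2] at this
  exact this

lemma pullJ0 (hv : Valid G π) (pd : PathData G m w)
    (h : π (w (m + 1)) = w m) : π (w 1) = w 0 := by
  simpa using pathShiftDown hv pd h 1 le_rfl (by omega)

lemma pushJ1 (hv : Valid G π) (pd : PathData G m w) (h : π (w 0) = w 1) :
    π (w m) = w (m + 1) ∧ π (w (m + 1)) ≠ w (m + 1) ∧ π (w (m + 1)) ≠ w m := by
  have hm : π (w m) = w (m + 1) := pathF hv pd 0 m (Nat.zero_le _) le_rfl h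
  refine ⟨hm, ?_, ?_⟩
  · intro hc
    have := π.injective (hm.trans hc.symm)
    have := pd.inj m (m + 1) (by omega) (by omega) this
    omega
  · intro hc
    have h3 : π (π (w m)) = w m := by rw [hm, hc]
    have h4 := hv.2 _ h3
    rw [hm] at h4
    have := pd.inj (m + 1) m (by omega) (by omega) h4
    omega

lemma pathFix (hv : Valid G π) (pd : PathData G m w)
    (h0 : π (w 0) ≠ w 1) (h1 : π (w (m + 1)) ≠ w m) :
    ∀ k, 1 ≤ k → k ≤ m → π (w k) = w k := by
  have key : ∀ k, k ≤ m → (π (w k) ≠ w (k + 1)) ∧ (1 ≤ k → π (w k) = w k) := by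
    intro k
    induction k with
    | zero => exact fun _ => ⟨h0, by omega⟩
    | succ k ih =>
      intro hk
      have ihk := ih (by omega)
      have hfix : π (w (k + 1)) = w (k + 1) := by
        rcases hv.1 (w (k + 1)) with h | h
        · exact h
        · rcases (pd.nbr (k + 1) (by omega) (by omega) _).mp h with h2 | h2
          · exfalso
            simp only [Nat.add_sub_cancel] at h2
            have h5 : π (w (k + 1)) = w ((k + 1) - 1) := by simpa using h2
            have := pathB hv pd (k + 1) (m + 1) (by omega) (by omega) le_rfl h5
            simp only [Nat.add_sub_cancel] at this
            exact h1 this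
          · exfalso
            set u := π.symm (w (k + 1)) with hu
            have hpu : π u = w (k + 1) := π.apply_symm_apply _
            have hune : u ≠ w (k + 1) := by
              intro hc
              rw [hc] at hpu
              rw [hpu] at h2
              have := pd.inj (k + 1) (k + 2) (by omega) (by omega) h2
              omega
            rcases hv.1 u with h3 | h3
            · exact hune (by rw [← h3, hpu])
            · rw [hpu] at h3
              rcases (pd.nbr (k + 1) (by omega) (by omega) u).mp h3.symm with h4 | h4
              · simp only [Nat.add_sub_cancel] at h4
                exact ihk.1 (by rw [← h4, hpu])
              · have h5 : π (π (w (k + 1))) = w (k + 1) := by rw [h2, ← h4, hpu]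
                have h6 := hv.2 _ h5
                rw [h2] at h6
                have := pd.inj (k + 2) (k + 1) (by omega) (by omega) h6
                omega
      refine ⟨?_, fun _ => hfix⟩
      rw [hfix]
      intro hc
      have := pd.inj (k + 1) (k + 2) (by omega) (by omega) hc
      omega
  exact fun k hk1 hk2 => (key k hk2).2 hk1

variable {V : Type*} {G : SimpleGraph V} {π π' : Equiv.Perm V} {x y : V}
  {m₁ m₂ m₃ : ℕ} {w₁ w₂ w₃ : ℕ → V}

lemma detCase (hv : Valid G π) (hv' : Valid G π')
    (pd1 : PathData G m₁ w₁) (pd2 : PathData G m₂ w₂) (pd3 : PathData G m₃ w₃)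
    (hx1 : w₁ 0 = x) (hx3 : w₃ 0 = x)
    (hy2 : w₂ (m₂ + 1) = y) (hy3 : w₃ (m₃ + 1) = y)
    (cov : ∀ v, v = x ∨ v = y ∨ (∃ k, 1 ≤ k ∧ k ≤ m₁ ∧ v = w₁ k) ∨
      (∃ k, 1 ≤ k ∧ k ≤ m₂ ∧ v = w₂ k) ∨ (∃ k, 1 ≤ k ∧ k ≤ m₃ ∧ v = w₃ k))
    (d31 : w₁ 1 ≠ w₃ 1) (d32 : w₂ m₂ ≠ w₃ m₃)
    (h0 : π x = w₁ 1) (h1 : π y = w₂ m₂)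
    (h0' : π' x = w₁ 1) (h1' : π' y = w₂ m₂) : π = π' := by
  have e0 : π (w₁ 0) = w₁ 1 := by rw [hx1]; exact h0
  have e0' : π' (w₁ 0) = w₁ 1 := by rw [hx1]; exact h0'
  have e1 : π (w₂ (m₂ + 1)) = w₂ m₂ := by rw [hy2]; exact h1
  have e1' : π' (w₂ (m₂ + 1)) = w₂ m₂ := by rw [hy2]; exact h1'
  ext v
  rcases cov v with rfl | rfl | ⟨k, hk1, hk2, rfl⟩ | ⟨k, hk1, hk2, rfl⟩ | ⟨k, hk1, hk2, rfl⟩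
  · rw [h0, h0']
  · rw [h1, h1']
  · rw [pathF hv pd1 0 k (by omega) hk2 e0, pathF hv' pd1 0 k (by omega) hk2 e0']
  · rw [pathShiftDown hv pd2 e1 k hk1 (by omega),
      pathShiftDown hv' pd2 e1' k hk1 (by omega)]
  · rw [pathFix hv pd3 (by rw [hx3, h0]; exact d31) (by rw [hy3, h1]; exact d32) k hk1 hk2,
      pathFix hv' pd3 (by rw [hx3, h0']; exact d31) (by rw [hy3, h1']; exact d32) k hk1 hk2]

lemma fixCase (hv : Valid G π)
    (pd1 : PathData G m₁ w₁) (pd2 : PathData G m₂ w₂) (pd3 : PathData G m₃ w₃)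
    (hx1 : w₁ 0 = x) (hx2 : w₂ 0 = x) (hx3 : w₃ 0 = x)
    (hy1 : w₁ (m₁ + 1) = y) (hy2 : w₂ (m₂ + 1) = y) (hy3 : w₃ (m₃ + 1) = y)
    (cov : ∀ v, v = x ∨ v = y ∨ (∃ k, 1 ≤ k ∧ k ≤ m₁ ∧ v = w₁ k) ∨
      (∃ k, 1 ≤ k ∧ k ≤ m₂ ∧ v = w₂ k) ∨ (∃ k, 1 ≤ k ∧ k ≤ m₃ ∧ v = w₃ k))
    (nbrY : ∀ u, G.Adj y u ↔ (u = w₁ m₁ ∨ u = w₂ m₂ ∨ u = w₃ m₃))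
    (h0 : π x = x) : π = 1 := by
  have hy : π y = y := by
    by_contra hne
    rcases hv.1 y with h | h
    · exact hne h
    · have key : ∀ (mm : ℕ) (ww : ℕ → V), PathData G mm ww → ww 0 = x →
          ww (mm + 1) = y → π y = ww mm → False := by
        intro mm ww pd hwx hwy hyw
        have : π (ww (mm + 1)) = ww mm := by rw [hwy]; exact hyw
        have h1 := pullJ0 hv pd this
        rw [hwx] at h1
        have := π.injective (h1.trans h0.symm)
        rw [← hwx] at this
        have := pd.inj 1 0 (by omega) (by omega) this
        omega
      rcases (nbrY _).mp h with h2 | h2 | h2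
      · exact key m₁ w₁ pd1 hx1 hy1 h2
      · exact key m₂ w₂ pd2 hx2 hy2 h2
      · exact key m₃ w₃ pd3 hx3 hy3 h2
  have key : ∀ (mm : ℕ) (ww : ℕ → V), PathData G mm ww → ww 0 = x →
      ww (mm + 1) = y → ∀ k, 1 ≤ k → k ≤ mm → π (ww k) = ww k := by
    intro mm ww pd hwx hwy
    refine pathFix hv pd ?_ ?_
    · rw [hwx, h0, ← hwx]
      intro hc
      have := pd.inj 0 1 (by omega) (by omega) hc
      omega
    · rw [hwy, hy, ← hwy]
      intro hc
      have := pd.inj (mm + 1) mm (by omega) (by omega) hc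
      omega
  ext v
  rcases cov v with rfl | rfl | ⟨k, hk1, hk2, rfl⟩ | ⟨k, hk1, hk2, rfl⟩ | ⟨k, hk1, hk2, rfl⟩
  · simpa using h0
  · simpa using hy
  · simpa using key m₁ w₁ pd1 hx1 hy1 k hk1 hk2
  · simpa using key m₂ w₂ pd2 hx2 hy2 k hk1 hk2
  · simpa using key m₃ w₃ pd3 hx3 hy3 k hk1 hk2


variable (n : ℕ)

def j0 : F8V n := Sum.inl 0
def j1 : F8V n := Sum.inl 1

def wA (k : ℕ) : F8V n :=
  if _h0 : k = 0 then j0 n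
  else if _h : k ≤ n then Sum.inr (Sum.inl ⟨k - 1, by omega⟩) else j1 n

def wB (k : ℕ) : F8V n :=
  if _h0 : k = 0 then j0 n
  else if _h : k ≤ 3 * n + 2 then Sum.inr (Sum.inr (Sum.inl ⟨k - 1, by omega⟩)) else j1 n

def wC (k : ℕ) : F8V n :=
  if _h0 : k = 0 then j0 n
  else if _h : k ≤ 3 * n + 2 then Sum.inr (Sum.inr (Sum.inr ⟨k - 1, by omega⟩)) else j1 n

lemma adj_iff (u v : F8V n) :
    (figureEight n).Adj u v ↔ u ≠ v ∧ (F8Rel n u v ∨ F8Rel n v u) := by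
  simp [figureEight, SimpleGraph.fromRel_adj]

lemma cover (v : F8V n) :
    v = j0 n ∨ v = j1 n ∨ (∃ k, 1 ≤ k ∧ k ≤ n ∧ v = wA n k) ∨
    (∃ k, 1 ≤ k ∧ k ≤ 3 * n + 2 ∧ v = wB n k) ∨
    (∃ k, 1 ≤ k ∧ k ≤ 3 * n + 2 ∧ v = wC n k) := by
  rcases v with a | i | i | i
  · fin_cases a
    · exact Or.inl rfl
    · exact Or.inr (Or.inl rfl)
  · refine Or.inr (Or.inr (Or.inl ⟨i.val + 1, by omega, by omega, ?_⟩))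
    simp [wA, i.isLt, Nat.ne_zero_of_lt, (by omega : i.val + 1 ≤ n)]
  · refine Or.inr (Or.inr (Or.inr (Or.inl ⟨i.val + 1, by omega, by omega, ?_⟩)))
    simp [wB, (by omega : i.val + 1 ≤ 3 * n + 2)]
  · refine Or.inr (Or.inr (Or.inr (Or.inr ⟨i.val + 1, by omega, by omega, ?_⟩)))
    simp [wC, (by omega : i.val + 1 ≤ 3 * n + 2)]

lemma pdB : PathData (figureEight n) (3 * n + 2) (wB n) := by
  constructor
  · intro k l hk hl h
    unfold wB j0 j1 at h
    split_ifs at h <;> simp_all [Fin.ext_iff] <;> omega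
  · intro k hk1 hk2 u
    rw [adj_iff]
    unfold wB j0 j1
    rcases u with a | i | i | i
    · fin_cases a <;> split_ifs <;> simp_all [F8Rel, Fin.ext_iff] <;> omega
    all_goals split_ifs <;> simp_all [F8Rel, Fin.ext_iff, -Fin.val_eq_zero_iff] <;> omega

lemma pdA : PathData (figureEight n) n (wA n) := by
  constructor
  · intro k l hk hl h
    unfold wA j0 j1 at h
    split_ifs at h <;> simp_all [Fin.ext_iff] <;> omega
  · intro k hk1 hk2 u
    rw [adj_iff]
    unfold wA j0 j1
    rcases u with a | i | i | i
    · fin_cases a <;> split_ifs <;> simp_all [F8Rel, Fin.ext_iff] <;> omega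
    all_goals split_ifs <;> simp_all [F8Rel, Fin.ext_iff] <;> omega

lemma pdC : PathData (figureEight n) (3 * n + 2) (wC n) := by
  constructor
  · intro k l hk hl h
    unfold wC j0 j1 at h
    split_ifs at h <;> simp_all [Fin.ext_iff] <;> omega
  · intro k hk1 hk2 u
    rw [adj_iff]
    unfold wC j0 j1
    rcases u with a | i | i | i
    · fin_cases a <;> split_ifs <;> simp_all [F8Rel, Fin.ext_iff] <;> omega
    all_goals split_ifs <;> simp_all [F8Rel, Fin.ext_iff, -Fin.val_eq_zero_iff] <;> omega

lemma nbrJ0 (u : F8V n) :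
    (figureEight n).Adj (j0 n) u ↔ (u = wA n 1 ∨ u = wB n 1 ∨ u = wC n 1) := by
  rw [adj_iff]
  unfold wA wB wC j0 j1
  rcases u with a | i | i | i
  · fin_cases a <;> split_ifs <;> simp_all [F8Rel, Fin.ext_iff] <;> omega
  all_goals split_ifs <;> simp_all [F8Rel, Fin.ext_iff, -Fin.val_eq_zero_iff] <;> omega

lemma nbrJ1 (u : F8V n) :
    (figureEight n).Adj (j1 n) u ↔
      (u = wA n n ∨ u = wB n (3 * n + 2) ∨ u = wC n (3 * n + 2)) := by
  rw [adj_iff]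
  unfold wA wB wC j0 j1
  rcases u with a | i | i | i
  · fin_cases a <;> split_ifs <;> simp_all [F8Rel, Fin.ext_iff] <;> omega
  all_goals split_ifs <;> simp_all [F8Rel, Fin.ext_iff, -Fin.val_eq_zero_iff] <;> omega

lemma dAB1 : wA n 1 ≠ wB n 1 := by
  unfold wA wB j0 j1; split_ifs <;> first | (exfalso; omega) | simp_all
lemma dAC1 : wA n 1 ≠ wC n 1 := by
  unfold wA wC j0 j1; split_ifs <;> first | (exfalso; omega) | simp_all
lemma dBC1 : wB n 1 ≠ wC n 1 := by
  unfold wB wC j0 j1; split_ifs <;> first | (exfalso; omega) | simp_all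
lemma dABt : wA n n ≠ wB n (3 * n + 2) := by
  unfold wA wB j0 j1; split_ifs <;> first | (exfalso; omega) | simp_all
lemma dACt : wA n n ≠ wC n (3 * n + 2) := by
  unfold wA wC j0 j1; split_ifs <;> first | (exfalso; omega) | simp_all
lemma dBCt : wB n (3 * n + 2) ≠ wC n (3 * n + 2) := by
  unfold wB wC j0 j1; split_ifs <;> first | (exfalso; omega) | simp_all

lemma wA0 : wA n 0 = j0 n := by simp [wA]
lemma wB0 : wB n 0 = j0 n := by simp [wB]
lemma wC0 : wC n 0 = j0 n := by simp [wC]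
lemma wAt : wA n (n + 1) = j1 n := by
  unfold wA j0 j1; split_ifs <;> first | (exfalso; omega) | simp_all
lemma wBt : wB n (3 * n + 2 + 1) = j1 n := by
  unfold wB j0 j1; split_ifs <;> first | (exfalso; omega) | simp_all
lemma wCt : wC n (3 * n + 2 + 1) = j1 n := by
  unfold wC j0 j1; split_ifs <;> first | (exfalso; omega) | simp_all


lemma valid_of_move {V : Type*} {G : SimpleGraph V} {X Y : Equiv.Perm V}
    (h : IsMove G X Y) : Valid G (X.symm.trans Y) := by
  constructor
  · intro v
    rcases h.1 (X.symm v) with h' | h'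
    · left
      simp only [Equiv.trans_apply, h', Equiv.apply_symm_apply]
    · right
      simpa using h'
  · intro v hvv
    by_contra hne
    refine h.2 (X.symm v) (X.symm ((X.symm.trans Y) v)) ?_ ⟨?_, ?_, ?_⟩
    · intro hc
      exact hne (by simpa using (X.symm.injective hc).symm)
    · simp [Equiv.trans_apply]
    · simpa [Equiv.trans_apply] using hvv
    · simp only [Equiv.apply_symm_apply]
      intro hc
      exact hne hc.symm

lemma classify {π : Equiv.Perm (F8V n)} (hv : Valid (figureEight n) π) (hne : π ≠ 1) :
    (π (j0 n) = wA n 1 ∧ (π (j1 n) = wB n (3 * n + 2) ∨ π (j1 n) = wC n (3 * n + 2))) ∨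
    (π (j0 n) = wB n 1 ∧ (π (j1 n) = wA n n ∨ π (j1 n) = wC n (3 * n + 2))) ∨
    (π (j0 n) = wC n 1 ∧ (π (j1 n) = wA n n ∨ π (j1 n) = wB n (3 * n + 2))) := by
  have hj0 : π (j0 n) ≠ j0 n := by
    intro h
    exact hne (fixCase hv (pdA n) (pdB n) (pdC n) (wA0 n) (wB0 n) (wC0 n)
      (wAt n) (wBt n) (wCt n) (cover n) (nbrJ1 n) h)
  have hadj : (figureEight n).Adj (j0 n) (π (j0 n)) := by
    rcases hv.1 (j0 n) with h | h
    · exact absurd h hj0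
    · exact h
  have hj1 : ∀ (m : ℕ) (w : ℕ → F8V n), PathData (figureEight n) m w → w 0 = j0 n →
      w (m + 1) = j1 n → π (j0 n) = w 1 → π (j1 n) ≠ j1 n ∧ π (j1 n) ≠ w m := by
    intro m w pd hw0 hwt h
    have hp := pushJ1 hv pd (by rw [hw0]; exact h)
    rw [hwt] at hp
    exact ⟨hp.2.1, hp.2.2⟩
  have hj1adj : π (j1 n) ≠ j1 n → (figureEight n).Adj (j1 n) (π (j1 n)) := by
    intro hne'
    rcases hv.1 (j1 n) with h | h
    · exact absurd h hne'
    · exact h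
  rcases (nbrJ0 n _).mp hadj with h | h | h
  · left
    refine ⟨h, ?_⟩
    obtain ⟨hne1, hne2⟩ := hj1 n (wA n) (pdA n) (wA0 n) (wAt n) h
    rcases (nbrJ1 n _).mp (hj1adj hne1) with h'' | h'' | h''
    · exact absurd h'' hne2
    · exact Or.inl h''
    · exact Or.inr h''
  · right; left
    refine ⟨h, ?_⟩
    obtain ⟨hne1, hne2⟩ := hj1 (3 * n + 2) (wB n) (pdB n) (wB0 n) (wBt n) h
    rcases (nbrJ1 n _).mp (hj1adj hne1) with h'' | h'' | h''
    · exact Or.inl h''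
    · exact absurd h'' hne2
    · exact Or.inr h''
  · right; right
    refine ⟨h, ?_⟩
    obtain ⟨hne1, hne2⟩ := hj1 (3 * n + 2) (wC n) (pdC n) (wC0 n) (wCt n) h
    rcases (nbrJ1 n _).mp (hj1adj hne1) with h'' | h'' | h''
    · exact Or.inl h''
    · exact Or.inr h''
    · exact absurd h'' hne2

lemma determined {π π' : Equiv.Perm (F8V n)} (hv : Valid (figureEight n) π)
    (hv' : Valid (figureEight n) π') (h0 : π (j0 n) = π' (j0 n))
    (h1 : π (j1 n) = π' (j1 n)) : π = π' := by
  by_cases hj : π (j0 n) = j0 n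
  · rw [fixCase hv (pdA n) (pdB n) (pdC n) (wA0 n) (wB0 n) (wC0 n)
      (wAt n) (wBt n) (wCt n) (cover n) (nbrJ1 n) hj,
      fixCase hv' (pdA n) (pdB n) (pdC n) (wA0 n) (wB0 n) (wC0 n)
      (wAt n) (wBt n) (wCt n) (cover n) (nbrJ1 n) (h0.symm.trans hj)]
  · have hne : π ≠ 1 := fun hc => hj (by rw [hc]; rfl)
    rcases classify n hv hne with ⟨hA, hB | hC⟩ | ⟨hB, hA | hC⟩ | ⟨hC, hA | hB⟩
    · exact detCase hv hv' (pdA n) (pdB n) (pdC n) (wA0 n) (wC0 n) (wBt n) (wCt n)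
        (fun v => by rcases cover n v with h | h | h | h | h; exacts [Or.inl h, Or.inr (Or.inl h), Or.inr (Or.inr (Or.inl h)), Or.inr (Or.inr (Or.inr (Or.inl h))), Or.inr (Or.inr (Or.inr (Or.inr h)))]) (dAC1 n) (dBCt n)
        hA hB (h0.symm.trans hA) (h1.symm.trans hB)
    · exact detCase hv hv' (pdA n) (pdC n) (pdB n) (wA0 n) (wB0 n) (wCt n) (wBt n)
        (fun v => by rcases cover n v with h | h | h | h | h; exacts [Or.inl h, Or.inr (Or.inl h), Or.inr (Or.inr (Or.inl h)), Or.inr (Or.inr (Or.inr (Or.inr h))), Or.inr (Or.inr (Or.inr (Or.inl h)))]) (dAB1 n) (dBCt n).symm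
        hA hC (h0.symm.trans hA) (h1.symm.trans hC)
    · exact detCase hv hv' (pdB n) (pdA n) (pdC n) (wB0 n) (wC0 n) (wAt n) (wCt n)
        (fun v => by rcases cover n v with h | h | h | h | h; exacts [Or.inl h, Or.inr (Or.inl h), Or.inr (Or.inr (Or.inr (Or.inl h))), Or.inr (Or.inr (Or.inl h)), Or.inr (Or.inr (Or.inr (Or.inr h)))]) (dBC1 n) (dACt n)
        hB hA (h0.symm.trans hB) (h1.symm.trans hA)
    · exact detCase hv hv' (pdB n) (pdC n) (pdA n) (wB0 n) (wA0 n) (wCt n) (wAt n)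
        (fun v => by rcases cover n v with h | h | h | h | h; exacts [Or.inl h, Or.inr (Or.inl h), Or.inr (Or.inr (Or.inr (Or.inr h))), Or.inr (Or.inr (Or.inl h)), Or.inr (Or.inr (Or.inr (Or.inl h)))]) (dAB1 n).symm (dACt n).symm
        hB hC (h0.symm.trans hB) (h1.symm.trans hC)
    · exact detCase hv hv' (pdC n) (pdA n) (pdB n) (wC0 n) (wB0 n) (wAt n) (wBt n)
        (fun v => by rcases cover n v with h | h | h | h | h; exacts [Or.inl h, Or.inr (Or.inl h), Or.inr (Or.inr (Or.inr (Or.inl h))), Or.inr (Or.inr (Or.inr (Or.inr h))), Or.inr (Or.inr (Or.inl h))]) (dBC1 n).symm (dABt n)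
        hC hA (h0.symm.trans hC) (h1.symm.trans hA)
    · exact detCase hv hv' (pdC n) (pdB n) (pdA n) (wC0 n) (wA0 n) (wBt n) (wAt n)
        (fun v => by rcases cover n v with h | h | h | h | h; exacts [Or.inl h, Or.inr (Or.inl h), Or.inr (Or.inr (Or.inr (Or.inr h))), Or.inr (Or.inr (Or.inr (Or.inl h))), Or.inr (Or.inr (Or.inl h))]) (dAC1 n).symm (dABt n).symm
        hC hB (h0.symm.trans hC) (h1.symm.trans hB)

end F8Proof

/-- From any configuration on a fully occupied figure-8 graph, at most `6`
configurations `Y ≠ X` are reachable by a single synchronous move; hence at most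
`7` configurations (including `X` itself) are reachable in one move. -/
theorem figure8_branching (n : ℕ) (X : Equiv.Perm (F8V n)) :
    Nat.card {Y : Equiv.Perm (F8V n) | Y ≠ X ∧ IsMove (figureEight n) X Y} ≤ 6 ∧
    Nat.card {Y : Equiv.Perm (F8V n) | IsMove (figureEight n) X Y} ≤ 7 := by
  classical
  open F8Proof in
  set S : Set (Equiv.Perm (F8V n)) := {Y | Y ≠ X ∧ IsMove (figureEight n) X Y} with hSdef
  have key : Nat.card S ≤ 6 := by
    set f : Equiv.Perm (F8V n) → F8V n × F8V n :=
      fun Y => (Y (X.symm (j0 n)), Y (X.symm (j1 n))) with hf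
    set T : Set (F8V n × F8V n) :=
      {(wA n 1, wB n (3 * n + 2)), (wA n 1, wC n (3 * n + 2)), (wB n 1, wA n n),
       (wB n 1, wC n (3 * n + 2)), (wC n 1, wA n n), (wC n 1, wB n (3 * n + 2))} with hT
    have hmaps : ∀ Y ∈ S, f Y ∈ T := by
      rintro Y ⟨hYX, hmove⟩
      have hv := valid_of_move hmove
      have hne : X.symm.trans Y ≠ 1 := by
        intro hc
        apply hYX
        ext r
        have := DFunLike.congr_fun hc (X r)
        simpa using this
      have hcl := classify n hv hne
      simp only [Equiv.trans_apply] at hcl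
      rcases hcl with ⟨h1, h2 | h2⟩ | ⟨h1, h2 | h2⟩ | ⟨h1, h2 | h2⟩ <;>
        simp only [hT, hf, Set.mem_insert_iff, Set.mem_singleton_iff, Prod.mk.injEq,
          h1, h2, true_and, and_true] <;> tauto
    have hinj : S.InjOn f := by
      rintro Y hY Y' hY' hff
      have hv := valid_of_move hY.2
      have hv' := valid_of_move hY'.2
      have h0 : (X.symm.trans Y) (j0 n) = (X.symm.trans Y') (j0 n) := congrArg Prod.fst hff
      have h1 : (X.symm.trans Y) (j1 n) = (X.symm.trans Y') (j1 n) := congrArg Prod.snd hff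
      have hd := determined n hv hv' h0 h1
      ext r
      have := DFunLike.congr_fun hd (X r)
      simpa using this
    calc Nat.card S = S.ncard := Nat.card_coe_set_eq S
      _ = (f '' S).ncard := (Set.ncard_image_of_injOn hinj).symm
      _ ≤ T.ncard := Set.ncard_le_ncard (Set.image_subset_iff.mpr hmaps) (Set.toFinite T)
      _ ≤ 6 := by
          have h1 := Set.ncard_insert_le (wA n 1, wB n (3 * n + 2))
            ({(wA n 1, wC n (3 * n + 2)), (wB n 1, wA n n), (wB n 1, wC n (3 * n + 2)),
              (wC n 1, wA n n), (wC n 1, wB n (3 * n + 2))} : Set (F8V n × F8V n))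
          have h2 := Set.ncard_insert_le (wA n 1, wC n (3 * n + 2))
            ({(wB n 1, wA n n), (wB n 1, wC n (3 * n + 2)),
              (wC n 1, wA n n), (wC n 1, wB n (3 * n + 2))} : Set (F8V n × F8V n))
          have h3 := Set.ncard_insert_le (wB n 1, wA n n)
            ({(wB n 1, wC n (3 * n + 2)),
              (wC n 1, wA n n), (wC n 1, wB n (3 * n + 2))} : Set (F8V n × F8V n))
          have h4 := Set.ncard_insert_le (wB n 1, wC n (3 * n + 2))
            ({(wC n 1, wA n n), (wC n 1, wB n (3 * n + 2))} : Set (F8V n × F8V n))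
          have h5 := Set.ncard_insert_le (wC n 1, wA n n)
            ({(wC n 1, wB n (3 * n + 2))} : Set (F8V n × F8V n))
          have h6 := Set.ncard_singleton (wC n 1, wB n (3 * n + 2))
          rw [hT]
          omega
  refine ⟨key, ?_⟩
  have hsub : {Y : Equiv.Perm (F8V n) | IsMove (figureEight n) X Y} ⊆ insert X S := by
    intro Y hY
    by_cases h : Y = X
    · exact Set.mem_insert_iff.mpr (Or.inl h)
    · exact Set.mem_insert_iff.mpr (Or.inr ⟨h, hY⟩)
  calc Nat.card {Y : Equiv.Perm (F8V n) | IsMove (figureEight n) X Y}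
      = ({Y : Equiv.Perm (F8V n) | IsMove (figureEight n) X Y} : Set _).ncard :=
        Nat.card_coe_set_eq _
    _ ≤ (insert X S).ncard := Set.ncard_le_ncard hsub (Set.toFinite _)
    _ ≤ S.ncard + 1 := Set.ncard_insert_le X S
    _ ≤ 7 := by
        have : Nat.card S = S.ncard := Nat.card_coe_set_eq S
        omega
end

section
/- Every instance (G, X_I, X_G), where G is the 3 × 2 grid graph (6 vertices, fully occupied by 6 labeled robots) and X_I, X_G are arbitrary configurations, is feasible: there exists a finite sequence of synchronous moves taking X_I to X_G. (The 3 × 2 grid is a figure-8 graph with 6 vertices, so any two robots on it can be exchanged.) -/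
open SimpleGraph

def gridGraph (m n : ℕ) : SimpleGraph (Fin m × Fin n) :=
  (pathGraph m) □ (pathGraph n)

abbrev Vg := Fin 3 × Fin 2

instance gridAdjDec : DecidableRel (gridGraph 3 2).Adj := fun x y =>
  decidable_of_iff
    ((((x.1 : ℕ) + 1 = y.1 ∨ (y.1 : ℕ) + 1 = x.1) ∧ x.2 = y.2) ∨
      (((x.2 : ℕ) + 1 = y.2 ∨ (y.2 : ℕ) + 1 = x.2) ∧ x.1 = y.1))
    (by simp [gridGraph, boxProd_adj, pathGraph_adj])

def Reach (X Y : Equiv.Perm Vg) : Prop :=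
  ∃ T Xs, IsSolution (gridGraph 3 2) X Y T Xs

theorem Reach.refl (X : Equiv.Perm Vg) : Reach X X :=
  ⟨0, fun _ => X, rfl, rfl, fun t ht => absurd ht (Nat.not_lt_zero t)⟩

theorem Reach.trans {X Y Z : Equiv.Perm Vg} (h1 : Reach X Y) (h2 : Reach Y Z) :
    Reach X Z := by
  obtain ⟨T1, Xs1, h10, h1T, h1m⟩ := h1
  obtain ⟨T2, Xs2, h20, h2T, h2m⟩ := h2
  refine ⟨T1 + T2, fun t => if t < T1 then Xs1 t else Xs2 (t - T1), ?_, ?_, ?_⟩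
  · by_cases h : 0 < T1
    · simpa [h] using h10
    · have hT1 : T1 = 0 := by omega
      simp only [h, if_false]
      rw [Nat.zero_sub, h20, ← h1T, hT1, h10]
  · have h : ¬ (T1 + T2 < T1) := by omega
    simp only [h, if_false, Nat.add_sub_cancel_left, h2T]
  · intro t ht
    by_cases h : t + 1 < T1
    · have ht' : t < T1 := by omega
      simpa [h, ht'] using h1m t ht'
    · by_cases ht' : t < T1
      · have he : t + 1 = T1 := by omega
        have : Xs2 (t + 1 - T1) = Xs1 (t + 1) := by
          rw [he, Nat.sub_self, h20, ← h1T]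
        simp only [h, if_false, ht', if_true, this]
        exact h1m t ht'
      · have harr : t + 1 - T1 = (t - T1) + 1 := by omega
        simp only [h, if_false, ht', harr]
        exact h2m (t - T1) (by omega)

theorem Reach.single {X Y : Equiv.Perm Vg} (h : IsMove (gridGraph 3 2) X Y) :
    Reach X Y := by
  refine ⟨1, fun t => if t = 0 then X else Y, by simp, by simp, ?_⟩
  intro t ht
  interval_cases t
  simpa using h

theorem Reach.relabel {X Y : Equiv.Perm Vg} (σ : Equiv.Perm Vg) (h : Reach X Y) :
    Reach (X * σ) (Y * σ) := by
  obtain ⟨T, Xs, h0, hT, hm⟩ := h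
  refine ⟨T, fun t => Xs t * σ, by show Xs 0 * σ = X * σ; rw [h0], by show Xs T * σ = Y * σ; rw [hT], ?_⟩
  intro t ht
  obtain ⟨hmove, hswap⟩ := hm t ht
  constructor
  · intro r
    simpa [Equiv.Perm.mul_apply] using hmove (σ r)
  · intro r s hrs
    simpa [Equiv.Perm.mul_apply] using hswap (σ r) (σ s) (fun hc => hrs (σ.injective hc))

/-- The subgroup of permutations reachable from the identity. -/
def reachSubgroup : Subgroup (Equiv.Perm Vg) where
  carrier := {π | Reach 1 π}
  one_mem' := Reach.refl 1
  mul_mem' := by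
    intro π ρ hπ hρ
    have h1 : Reach (1 * ρ) (π * ρ) := Reach.relabel ρ hπ
    rw [one_mul] at h1
    exact Reach.trans hρ h1
  inv_mem' := by
    intro π hπ
    have hpow : ∀ n : ℕ, Reach 1 (π ^ n) := by
      intro n
      induction n with
      | zero => simpa using Reach.refl 1
      | succ n ih =>
        have h1 : Reach (1 * π) (π ^ n * π) := Reach.relabel π ih
        rw [one_mul, ← pow_succ] at h1
        exact Reach.trans hπ h1
    have hpos : 0 < orderOf π := orderOf_pos π
    have h1 : π ^ (orderOf π - 1) * π = 1 := by
      rw [← pow_succ, Nat.sub_add_cancel hpos, pow_orderOf_eq_one]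
    have h2 : π ^ (orderOf π - 1) = π⁻¹ := eq_inv_of_mul_eq_one_left h1
    simpa [h2] using hpow (orderOf π - 1)

def permA : Equiv.Perm Vg :=
  List.formPerm [((0 : Fin 3), (0 : Fin 2)), (1, 0), (1, 1), (0, 1)]

def permB : Equiv.Perm Vg :=
  List.formPerm [((1 : Fin 3), (0 : Fin 2)), (2, 0), (2, 1), (1, 1)]

def permC : Equiv.Perm Vg :=
  List.formPerm [((0 : Fin 3), (0 : Fin 2)), (1, 0), (2, 0), (2, 1), (1, 1), (0, 1)]

theorem moveA : IsMove (gridGraph 3 2) 1 permA := by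
  constructor
  · decide
  · decide

theorem moveB : IsMove (gridGraph 3 2) 1 permB := by
  constructor
  · decide
  · decide

theorem moveC : IsMove (gridGraph 3 2) 1 permC := by
  constructor
  · decide
  · decide

theorem permA_mem : permA ∈ reachSubgroup := Reach.single moveA
theorem permB_mem : permB ∈ reachSubgroup := Reach.single moveB
theorem permC_mem : permC ∈ reachSubgroup := Reach.single moveC

theorem swap_word :
    permC⁻¹ * permB * permA =
      Equiv.swap (((0 : Fin 3), (0 : Fin 2)) : Vg) ((1 : Fin 3), (0 : Fin 2)) := by
  decide

theorem permC_apply :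
    permC (((0 : Fin 3), (0 : Fin 2)) : Vg) = ((1 : Fin 3), (0 : Fin 2)) := by
  decide

theorem permC_isCycle : permC.IsCycle :=
  List.isCycle_formPerm (by decide) (by decide)

theorem permC_support : permC.support = Finset.univ := by decide

theorem reachSubgroup_eq_top : reachSubgroup = ⊤ := by
  have h := Equiv.Perm.closure_cycle_adjacent_swap permC_isCycle permC_support
    (((0 : Fin 3), (0 : Fin 2)) : Vg)
  rw [eq_top_iff, ← h, Subgroup.closure_le]
  intro x hx
  rcases hx with h1 | h2
  · rw [h1]; exact permC_mem
  · simp only [Set.mem_singleton_iff] at h2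
    rw [h2, permC_apply, ← swap_word]
    exact Subgroup.mul_mem _
      (Subgroup.mul_mem _ (Subgroup.inv_mem _ permC_mem) permB_mem) permA_mem

/-- Every instance on the fully occupied `3 × 2` grid is feasible. -/
theorem grid32_feasible (XI XG : Equiv.Perm (Fin 3 × Fin 2)) :
    ∃ (T : ℕ) (Xs : ℕ → Equiv.Perm (Fin 3 × Fin 2)),
      IsSolution (gridGraph 3 2) XI XG T Xs := by
  have hmem : XG * XI⁻¹ ∈ reachSubgroup := by
    rw [reachSubgroup_eq_top]; trivial
  have h : Reach 1 (XG * XI⁻¹) := hmem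
  have h2 : Reach (1 * XI) (XG * XI⁻¹ * XI) := Reach.relabel XI h
  rw [one_mul, inv_mul_cancel_right] at h2
  exact h2
end
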